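/- Let u_0 ∈ H^1(ℝ⁺) with u_0(0) = 0, a < 0, and fix τ > 0 with Δx = τ|a|Δt. For j ∈ {0,…,r−1}, n ≥ 0, set η_{j,n} := (1/Δx)∫_{x_j}^{x_{j+1}} u_0(x + |a| t^n) dx − (1/Δt)∫_{t^n}^{t^{n+1}} u_0(|a| t) dt, where x_j = jΔx, t^n = nΔt. Then there is a constant C (independent of u_0 and Δt ∈ (0,1]) such that Σ_{n≥0} Σ_{j=0}^{r-1} Δt |η_{j,n}|^2 ≤ C Δt^2 ‖u_0'‖_{L²(ℝ⁺)}^2. -/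

import Mathlib

open MeasureTheory Set

private lemma g_on {g : ℝ → ℝ} (hg : MemLp g 2 volume) (a b : ℝ) :
    IntegrableOn g (Ioc a b) volume := by
  haveI : Fact (volume (Ioc a b) < ⊤) := ⟨measure_Ioc_lt_top⟩
  exact memLp_one_iff_integrable.mp
    ((hg.restrict _).mono_exponent (by norm_num))

private lemma g_ii {g : ℝ → ℝ} (hg : MemLp g 2 volume) (a b : ℝ) :
    IntervalIntegrable g volume a b := ⟨g_on hg a b, g_on hg b a⟩

private lemma sq_rpow_half {x : ℝ} (hx : 0 ≤ x) : (x ^ ((1:ℝ)/2)) ^ (2:ℕ) = x := by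
  rw [← Real.rpow_natCast (x ^ ((1:ℝ)/2)) 2, ← Real.rpow_mul hx]
  norm_num

private lemma cs_aux {g : ℝ → ℝ} (hg : MemLp g 2 volume) {a b : ℝ} (hab : a ≤ b) :
    (∫ x in a..b, |g x|) ^ 2 ≤ (b - a) * ∫ x in a..b, (g x) ^ 2 := by
  rw [intervalIntegral.integral_of_le hab, intervalIntegral.integral_of_le hab]
  set μ := volume.restrict (Ioc a b) with hμ
  haveI : Fact (volume (Ioc a b) < ⊤) := ⟨measure_Ioc_lt_top⟩
  have hint : ∀ c : ℝ, ∫ _ in Ioc a b, c = (b - a) * c := by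
    intro c
    rw [setIntegral_const, Real.volume_real_Ioc_of_le hab, smul_eq_mul]
  have hconj : (2:ℝ).HolderConjugate 2 := Real.HolderConjugate.two_two
  have hf2 : MemLp (fun x => |g x|) (ENNReal.ofReal 2) μ := by
    rw [show ENNReal.ofReal 2 = 2 by norm_num]
    simpa only [Real.norm_eq_abs] using (hg.restrict (Ioc a b)).norm
  have h12 : MemLp (fun _ : ℝ => (1:ℝ)) (ENNReal.ofReal 2) μ := memLp_const 1
  have H := integral_mul_le_Lp_mul_Lq_of_nonneg hconj
    (f := fun x => |g x|) (g := fun _ => (1:ℝ))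
    (Filter.Eventually.of_forall fun x => abs_nonneg _)
    (Filter.Eventually.of_forall fun _ => zero_le_one) hf2 h12
  simp only [mul_one, Real.one_rpow] at H
  have habs : ∀ x : ℝ, |g x| ^ (2:ℝ) = (g x) ^ 2 := fun x => by
    rw [Real.rpow_two, sq_abs]
  simp only [habs] at H
  rw [hint 1, mul_one] at H
  have h1 : 0 ≤ ∫ x in Ioc a b, |g x| ∂volume := integral_nonneg fun x => abs_nonneg _
  have h2 : 0 ≤ ∫ x in Ioc a b, (g x) ^ 2 ∂volume := integral_nonneg fun x => sq_nonneg _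
  calc (∫ x in Ioc a b, |g x| ∂volume) ^ 2
      ≤ ((∫ x in Ioc a b, (g x) ^ 2 ∂volume) ^ ((1:ℝ)/2) * (b - a) ^ ((1:ℝ)/2)) ^ 2 :=
        pow_le_pow_left₀ h1 H 2
    _ = (b - a) * ∫ x in Ioc a b, (g x) ^ 2 ∂volume := by
        rw [mul_pow, sq_rpow_half h2, sq_rpow_half (sub_nonneg.2 hab)]; ring

private lemma avg_bound {u₀ g : ℝ → ℝ} (hd : ∀ x, HasDerivAt u₀ (g x) x)
    (hg : MemLp g 2 volume) {β γ α L : ℝ} (hL : 0 < L) (hβα : β ≤ α) (hγ : α + L ≤ γ) :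
    |(1/L) * (∫ x in α..(α+L), u₀ x) - u₀ β| ≤ ∫ x in β..γ, |g x| := by
  have hcont : Continuous u₀ := continuous_iff_continuousAt.mpr fun x => (hd x).continuousAt
  set K := ∫ x in β..γ, |g x| with hK
  have hpt : ∀ s ∈ Icc α (α + L), |u₀ s - u₀ β| ≤ K := by
    intro s hs
    have hβs : β ≤ s := hβα.trans hs.1
    have hsγ : s ≤ γ := hs.2.trans hγ
    have hftc : ∫ x in β..s, g x = u₀ s - u₀ β :=
      intervalIntegral.integral_eq_sub_of_hasDerivAt (fun x _ => hd x) (g_ii hg β s)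
    rw [← hftc]
    calc |∫ x in β..s, g x| ≤ ∫ x in β..s, |g x| :=
          intervalIntegral.abs_integral_le_integral_abs hβs
      _ ≤ K := intervalIntegral.integral_mono_interval le_rfl hβs hsγ
          (Filter.Eventually.of_forall fun x => abs_nonneg _) ((g_ii hg β γ).abs)
  have hαL : α ≤ α + L := le_add_of_nonneg_right hL.le
  have hiu : IntervalIntegrable u₀ volume α (α + L) := hcont.intervalIntegrable _ _
  have hup : (∫ x in α..(α+L), u₀ x) ≤ L * u₀ β + L * K := by
    have := intervalIntegral.integral_mono_on (g := fun _ => u₀ β + K) hαL hiu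
      (intervalIntegrable_const)
      (fun x hx => by
        show u₀ x ≤ u₀ β + K
        have h := hpt x hx; rw [abs_le] at h; linarith [h.2])
    simpa using this
  have hlo : L * u₀ β ≤ (∫ x in α..(α+L), u₀ x) + L * K := by
    have := intervalIntegral.integral_mono_on (f := fun _ => u₀ β - K) hαL
      (intervalIntegrable_const) hiu
      (fun x hx => by
        show u₀ β - K ≤ u₀ x
        have h := hpt x hx; rw [abs_le] at h; linarith [h.1])
    simp only [intervalIntegral.integral_const, smul_eq_mul, add_sub_cancel_left] at this
    nlinarith
  rw [abs_le]
  constructor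
  · rw [le_sub_iff_add_le, one_div, inv_mul_eq_div, le_div_iff₀ hL]
    nlinarith
  · rw [sub_le_iff_le_add, one_div, inv_mul_eq_div, div_le_iff₀ hL]
    nlinarith

set_option maxHeartbeats 1000000 in
/-- outgoing case boundary errors: for u₀ ∈ H¹(ℝ⁺) with u₀(0) = 0,
a < 0, Δx = τ|a|Δt, the mismatch η_{j,n} between the cell average of the exact
solution and the time average of its boundary trace satisfies
Σ_{n,j} Δt |η_{j,n}|² ≤ C Δt² ‖u₀'‖²_{L²(ℝ⁺)}. -/
theorem stmt14 (r : ℕ) (a τ : ℝ) (ha : a < 0) (hτ : 0 < τ) :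
    ∃ C > 0, ∀ (u₀ g : ℝ → ℝ),
      u₀ 0 = 0 →
      (∀ x : ℝ, HasDerivAt u₀ (g x) x) →
      MeasureTheory.MemLp g 2 MeasureTheory.volume →
      ∀ Δt : ℝ, Δt ∈ Set.Ioc (0 : ℝ) 1 →
        ∑' n : ℕ, ∑ j ∈ Finset.range r,
          Δt * ((1 / (τ * |a| * Δt)) *
              (∫ x in ((j : ℝ) * (τ * |a| * Δt))..(((j : ℝ) + 1) * (τ * |a| * Δt)),
                u₀ (x + |a| * (n * Δt)))
            - (1 / Δt) * ∫ t in ((n : ℝ) * Δt)..(((n : ℝ) + 1) * Δt), u₀ (|a| * t)) ^ 2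
          ≤ C * Δt ^ 2 * ∫ x in Set.Ioi (0 : ℝ), (g x) ^ 2 := by
  have ha0 : (0:ℝ) < |a| := abs_pos.mpr ha.ne
  set K : ℕ := ⌈(r : ℝ) * τ⌉₊ + 1 with hKdef
  have hK1 : 1 ≤ (K:ℝ) := by exact_mod_cast Nat.one_le_iff_ne_zero.mpr (by omega)
  have hrτK : (r:ℝ) * τ ≤ (K:ℝ) := by
    calc (r:ℝ) * τ ≤ (⌈(r:ℝ) * τ⌉₊ : ℝ) := Nat.le_ceil _
      _ ≤ (K:ℝ) := by exact_mod_cast Nat.le_succ _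
  refine ⟨4 * r * K^2 * |a| + 1, by positivity, ?_⟩
  intro u₀ g hu0 hd hg Δt hΔt
  obtain ⟨hΔ0, hΔ1⟩ := hΔt
  set h := |a| * Δt with hhdef
  have hh0 : 0 < h := mul_pos ha0 hΔ0
  set G := ∫ x in Set.Ioi (0:ℝ), (g x)^2 with hGdef
  have hG0 : 0 ≤ G := setIntegral_nonneg measurableSet_Ioi fun x _ => sq_nonneg _
  have hGint : IntegrableOn (fun x => (g x)^2) (Ioi 0) volume := hg.integrable_sq.integrableOn
  have hg2ii : ∀ p q : ℝ, IntervalIntegrable (fun x => (g x)^2) volume p q :=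
    fun p q => hg.integrable_sq.intervalIntegrable
  set c : ℕ → ℝ := fun k => ∫ x in ((k:ℝ)*h)..(((k:ℝ)+1)*h), (g x)^2 with hcdef
  have hc0 : ∀ k, 0 ≤ c k := fun k =>
    intervalIntegral.integral_nonneg
      (by nlinarith [Nat.cast_nonneg (α := ℝ) k] : ((k:ℝ))*h ≤ ((k:ℝ)+1)*h)
      fun x _ => sq_nonneg _
  have hcsum : ∀ t : Finset ℕ, ∑ k ∈ t, c k ≤ G := by
    intro t
    obtain ⟨N, hN⟩ := t.exists_nat_subset_range
    calc ∑ k ∈ t, c k ≤ ∑ k ∈ Finset.range N, c k :=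
          Finset.sum_le_sum_of_subset_of_nonneg hN fun k _ _ => hc0 k
      _ = ∫ x in (0:ℝ)..((N:ℝ)*h), (g x)^2 := by
          have H := intervalIntegral.sum_integral_adjacent_intervals
            (a := fun k : ℕ => (k:ℝ)*h) (n := N) (f := fun x => (g x)^2)
            (μ := volume) (fun k _ => hg2ii _ _)
          simp only [Nat.cast_zero, zero_mul] at H
          rw [← H]
          refine Finset.sum_congr rfl fun k _ => ?_
          simp only [hcdef]
          push_cast
          ring_nf
      _ ≤ G := by
          rw [intervalIntegral.integral_of_le (by positivity)]
          exact setIntegral_mono_set hGint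
            (Filter.Eventually.of_forall fun x => sq_nonneg _)
            (Ioc_subset_Ioi_self.eventuallyLE)
  have key : ∀ (n j : ℕ), j < r →
      Δt * ((1 / (τ * |a| * Δt)) *
          (∫ x in ((j : ℝ) * (τ * |a| * Δt))..(((j : ℝ) + 1) * (τ * |a| * Δt)),
            u₀ (x + |a| * ((n:ℝ) * Δt)))
        - (1 / Δt) * ∫ t in ((n : ℝ) * Δt)..(((n : ℝ) + 1) * Δt), u₀ (|a| * t)) ^ 2
      ≤ 4 * K * h * Δt * ∑ i ∈ Finset.range K, c (n + i) := by
    intro n j hj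
    set β := (n:ℝ) * h with hβ
    set γ := ((n:ℝ) + (K:ℝ)) * h with hγ
    set Kn := ∫ x in β..γ, |g x| with hKn
    have hτh : 0 < τ * |a| * Δt := by positivity
    -- bound on A
    have hA : |(1 / (τ * |a| * Δt)) *
        (∫ x in ((j : ℝ) * (τ * |a| * Δt))..(((j : ℝ) + 1) * (τ * |a| * Δt)),
          u₀ (x + |a| * ((n:ℝ) * Δt))) - u₀ β| ≤ Kn := by
      have hshift : |a| * ((n:ℝ) * Δt) = β := by rw [hβ, hhdef]; ring
      set α := (j:ℝ) * (τ * |a| * Δt) + β with hα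
      have e1 : (∫ x in ((j : ℝ) * (τ * |a| * Δt))..(((j : ℝ) + 1) * (τ * |a| * Δt)),
          u₀ (x + |a| * ((n:ℝ) * Δt))) = ∫ x in α..(α + τ * |a| * Δt), u₀ x := by
        rw [hshift, intervalIntegral.integral_comp_add_right]
        congr 1
        rw [hα]; ring
      rw [e1]
      refine avg_bound hd hg hτh ?_ ?_
      · rw [hα]; nlinarith [Nat.cast_nonneg (α := ℝ) j]
      · rw [hα, hβ, hγ, hhdef]
        have hj1 : (j:ℝ) + 1 ≤ (r:ℝ) := by exact_mod_cast Nat.succ_le_of_lt hj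
        nlinarith [Nat.cast_nonneg (α := ℝ) n, mul_pos ha0 hΔ0,
          mul_le_mul_of_nonneg_right (mul_le_mul_of_nonneg_right hj1 hτ.le)
            (mul_pos ha0 hΔ0).le,
          mul_le_mul_of_nonneg_right hrτK (mul_pos ha0 hΔ0).le]
    -- bound on B
    have hB : |(1 / Δt) * (∫ t in ((n : ℝ) * Δt)..(((n : ℝ) + 1) * Δt), u₀ (|a| * t))
        - u₀ β| ≤ Kn := by
      have e2 : (∫ t in ((n : ℝ) * Δt)..(((n : ℝ) + 1) * Δt), u₀ (|a| * t))
          = |a|⁻¹ * ∫ x in β..(β + h), u₀ x := by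
        rw [intervalIntegral.integral_comp_mul_left u₀ ha0.ne', smul_eq_mul]
        congr 2
        · rw [hβ, hhdef]; ring
        · rw [hβ, hhdef]; ring
      have e3 : (1 / Δt) * (|a|⁻¹ * ∫ x in β..(β + h), u₀ x)
          = (1 / h) * ∫ x in β..(β + h), u₀ x := by
        rw [hhdef]; ring
      rw [e2, e3]
      refine avg_bound hd hg hh0 le_rfl ?_
      rw [hβ, hγ]
      nlinarith [Nat.cast_nonneg (α := ℝ) n, hh0]
    -- combine
    have hβγ : β ≤ γ := by
      rw [hβ, hγ]
      exact mul_le_mul_of_nonneg_right (by linarith [Nat.cast_nonneg (α := ℝ) K, hK1]) hh0.le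
    have hsq : ((1 / (τ * |a| * Δt)) *
          (∫ x in ((j : ℝ) * (τ * |a| * Δt))..(((j : ℝ) + 1) * (τ * |a| * Δt)),
            u₀ (x + |a| * ((n:ℝ) * Δt)))
        - (1 / Δt) * ∫ t in ((n : ℝ) * Δt)..(((n : ℝ) + 1) * Δt), u₀ (|a| * t)) ^ 2
        ≤ 4 * Kn ^ 2 := by
      set A := (1 / (τ * |a| * Δt)) *
          (∫ x in ((j : ℝ) * (τ * |a| * Δt))..(((j : ℝ) + 1) * (τ * |a| * Δt)),
            u₀ (x + |a| * ((n:ℝ) * Δt))) with hAdef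
      set B := (1 / Δt) * ∫ t in ((n : ℝ) * Δt)..(((n : ℝ) + 1) * Δt), u₀ (|a| * t) with hBdef
      have habs : |A - B| ≤ 2 * Kn := by
        calc |A - B| ≤ |A - u₀ β| + |u₀ β - B| := abs_sub_le A (u₀ β) B
          _ = |A - u₀ β| + |B - u₀ β| := by rw [abs_sub_comm (u₀ β) B]
          _ ≤ Kn + Kn := add_le_add hA hB
          _ = 2 * Kn := by ring
      calc (A - B) ^ 2 = |A - B| ^ 2 := (sq_abs _).symm
        _ ≤ (2 * Kn) ^ 2 := pow_le_pow_left₀ (abs_nonneg _) habs 2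
        _ = 4 * Kn ^ 2 := by ring
    have hKn2 : Kn ^ 2 ≤ (K:ℝ) * h * ∑ i ∈ Finset.range K, c (n + i) := by
      have hcs := cs_aux hg hβγ
      have hsum : (∫ x in β..γ, (g x)^2) = ∑ i ∈ Finset.range K, c (n + i) := by
        have H := intervalIntegral.sum_integral_adjacent_intervals
          (a := fun i : ℕ => ((n + i : ℕ):ℝ)*h) (n := K) (f := fun x => (g x)^2)
          (μ := volume) (fun k _ => hg2ii _ _)
        rw [hβ, hγ]
        have e0 : ((n + 0 : ℕ):ℝ) * h = (n:ℝ) * h := by push_cast; ring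
        have eK : ((n + K : ℕ):ℝ) * h = ((n:ℝ) + (K:ℝ)) * h := by push_cast; ring
        simp only [e0, eK] at H
        rw [← H]
        refine Finset.sum_congr rfl fun i _ => ?_
        simp only [hcdef]
        push_cast
        ring_nf
      have hγβ : γ - β = (K:ℝ) * h := by rw [hβ, hγ]; ring
      rw [hγβ, hsum] at hcs
      exact hcs.trans_eq rfl
    calc Δt * (_ - _) ^ 2 ≤ Δt * (4 * Kn ^ 2) :=
          mul_le_mul_of_nonneg_left hsq hΔ0.le
      _ ≤ Δt * (4 * ((K:ℝ) * h * ∑ i ∈ Finset.range K, c (n + i))) := by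
          have := mul_le_mul_of_nonneg_left hKn2 (by norm_num : (0:ℝ) ≤ 4)
          exact mul_le_mul_of_nonneg_left this hΔ0.le
      _ = 4 * K * h * Δt * ∑ i ∈ Finset.range K, c (n + i) := by ring
  -- sum everything
  refine tsum_le_of_sum_le' ?_ ?_
  · have : (0:ℝ) ≤ 4 * r * K^2 * |a| + 1 := by positivity
    have h2 : (0:ℝ) ≤ Δt ^ 2 * G := by positivity
    calc (0:ℝ) ≤ (4 * r * K^2 * |a| + 1) * (Δt ^ 2 * G) := mul_nonneg this h2
      _ = (4 * r * K^2 * |a| + 1) * Δt ^ 2 * G := by ring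
  intro s
  have step1 : ∀ n ∈ s, ∑ j ∈ Finset.range r,
      Δt * ((1 / (τ * |a| * Δt)) *
          (∫ x in ((j : ℝ) * (τ * |a| * Δt))..(((j : ℝ) + 1) * (τ * |a| * Δt)),
            u₀ (x + |a| * ((n:ℝ) * Δt)))
        - (1 / Δt) * ∫ t in ((n : ℝ) * Δt)..(((n : ℝ) + 1) * Δt), u₀ (|a| * t)) ^ 2
      ≤ (r:ℝ) * (4 * K * h * Δt * ∑ i ∈ Finset.range K, c (n + i)) := by
    intro n _
    calc ∑ j ∈ Finset.range r, _ ≤ ∑ j ∈ Finset.range r,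
          (4 * (K:ℝ) * h * Δt * ∑ i ∈ Finset.range K, c (n + i)) :=
          Finset.sum_le_sum fun j hj => key n j (Finset.mem_range.mp hj)
      _ = (r:ℝ) * (4 * K * h * Δt * ∑ i ∈ Finset.range K, c (n + i)) := by
          rw [Finset.sum_const, Finset.card_range, nsmul_eq_mul]
  have step2 : ∑ n ∈ s, ∑ i ∈ Finset.range K, c (n + i) ≤ (K:ℝ) * G := by
    rw [Finset.sum_comm]
    calc ∑ i ∈ Finset.range K, ∑ n ∈ s, c (n + i)
        ≤ ∑ i ∈ Finset.range K, G := by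
          refine Finset.sum_le_sum fun i _ => ?_
          have himg : ∑ x ∈ s.image (· + i), c x = ∑ x ∈ s, c (x + i) :=
            Finset.sum_image (fun x _ y _ hxy => by omega)
          rw [← himg]
          exact hcsum _
      _ = (K:ℝ) * G := by rw [Finset.sum_const, Finset.card_range, nsmul_eq_mul]
  calc ∑ n ∈ s, ∑ j ∈ Finset.range r, _
      ≤ ∑ n ∈ s, (r:ℝ) * (4 * K * h * Δt * ∑ i ∈ Finset.range K, c (n + i)) :=
        Finset.sum_le_sum step1
    _ = (r:ℝ) * (4 * K * h * Δt) * ∑ n ∈ s, ∑ i ∈ Finset.range K, c (n + i) := by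
        rw [Finset.mul_sum]
        refine Finset.sum_congr rfl fun n _ => by ring
    _ ≤ (r:ℝ) * (4 * K * h * Δt) * ((K:ℝ) * G) := by
        refine mul_le_mul_of_nonneg_left step2 ?_
        positivity
    _ ≤ (4 * r * K^2 * |a| + 1) * Δt ^ 2 * G := by
        rw [hhdef]
        nlinarith [mul_nonneg (sq_nonneg Δt) hG0]
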